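/- Let N ∈ ℕ with N ≥ 3 and let γ satisfy the curve hypotheses with parameter N. Let p, q, r ∈ [1,∞], and suppose there is a constant C such that ‖Tf‖_{L^r_u L^q_x(ℝ²×[1,2])} ≤ C‖f‖_{L^p(ℝ²)} for all f ∈ L^p(ℝ²). Then 1/q ≥ max{ 2/p − 1, 1/p − 1/3 } (with the convention 1/∞ = 0). -/

import Mathlib

open MeasureTheory Filter Set
open scoped ENNReal NNReal

noncomputable section

/-- The averaging operator along the dilated plane curve `(u t, u γ(t))`:
`Tf(x,u) = ∫_0^1 f(x₁ - u t, x₂ - u γ(t)) dt`. -/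
def Tavg (γ : ℝ → ℝ) (f : ℝ × ℝ → ℝ) (x : ℝ × ℝ) (u : ℝ) : ℝ :=
  ∫ t in Set.Ioc (0 : ℝ) 1, f (x.1 - u * t, x.2 - u * γ t)

/-- The curve hypotheses with parameter `N`: `γ ∈ C^N((0,1])`, `γ(t) → 0` as `t → 0⁺`,
`γ` monotonic on `(0,1]`, with the lower bounds (i) for `j = 1,2` and the upper
bounds (ii) for `j = 1,…,N` on `|tʲ γ⁽ʲ⁾(t) / γ(t)|`. -/
def CurveHyp (γ : ℝ → ℝ) (N : ℕ) : Prop :=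
  ContDiffOn ℝ N γ (Set.Ioc 0 1) ∧
  Filter.Tendsto γ (nhdsWithin 0 (Set.Ioi 0)) (nhds 0) ∧
  (MonotoneOn γ (Set.Ioc 0 1) ∨ AntitoneOn γ (Set.Ioc 0 1)) ∧
  (∀ j : ℕ, 1 ≤ j → j ≤ 2 → ∃ C : ℝ, 0 < C ∧ ∀ t ∈ Set.Ioc (0 : ℝ) 1,
    C ≤ |t ^ j * iteratedDerivWithin j γ (Set.Ioc 0 1) t / γ t|) ∧
  (∀ j : ℕ, 1 ≤ j → j ≤ N → ∃ C : ℝ, 0 < C ∧ ∀ t ∈ Set.Ioc (0 : ℝ) 1,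
    |t ^ j * iteratedDerivWithin j γ (Set.Ioc 0 1) t / γ t| ≤ C)

/-- `ω := limsup_{t→0⁺} ln|γ(t)| / ln t`. -/
def curveOmega (γ : ℝ → ℝ) : ℝ :=
  Filter.limsup (fun t => Real.log |γ t| / Real.log t) (nhdsWithin 0 (Set.Ioi 0))

/-- The `L^q(μ)` norm (valued in `ℝ≥0∞`) of an `ℝ≥0∞`-valued function, with the
essential supremum when `q = ∞`. -/
def eLpNormENN {α : Type*} [MeasurableSpace α] (g : α → ℝ≥0∞) (q : ℝ≥0∞)
    (μ : Measure α) : ℝ≥0∞ :=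
  if q = ∞ then essSup g μ else (∫⁻ a, g a ^ q.toReal ∂μ) ^ (1 / q.toReal)


/-- The time-space mixed norm `‖F‖_{L^r_u L^q_x(ℝ² × [1,2])}`. -/
def mixedUX (r q : ℝ≥0∞) (F : ℝ × ℝ → ℝ → ℝ) : ℝ≥0∞ :=
  eLpNormENN (fun u => eLpNorm (fun x => F x u) q (volume : Measure (ℝ × ℝ))) r
    ((volume : Measure ℝ).restrict (Set.Icc 1 2))

lemma shearMeas (h : ℝ → ℝ) (hc : Continuous h) (A B C D : ℝ) :
    MeasurableSet {y : ℝ × ℝ | y.1 ∈ Ioc A B ∧ y.2 - h y.1 ∈ Ioc C D} := by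
  have m1 : MeasurableSet (Prod.fst ⁻¹' (Ioc A B) : Set (ℝ × ℝ)) :=
    measurable_fst measurableSet_Ioc
  have m2 : MeasurableSet ((fun y : ℝ × ℝ => y.2 - h y.1) ⁻¹' (Ioc C D)) :=
    (continuous_snd.sub (hc.comp continuous_fst)).measurable measurableSet_Ioc
  exact m1.inter m2

lemma shearVol (h : ℝ → ℝ) (hc : Continuous h) (A B C D : ℝ) :
    volume {y : ℝ × ℝ | y.1 ∈ Ioc A B ∧ y.2 - h y.1 ∈ Ioc C D}
      = ENNReal.ofReal (B - A) * ENNReal.ofReal (D - C) := by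
  rw [MeasureTheory.Measure.volume_eq_prod, Measure.prod_apply (shearMeas h hc A B C D)]
  have hsl : ∀ x : ℝ,
      (volume (Prod.mk x ⁻¹' {y : ℝ × ℝ | y.1 ∈ Ioc A B ∧ y.2 - h y.1 ∈ Ioc C D}))
        = (Ioc A B).indicator (fun _ => ENNReal.ofReal (D - C)) x := by
    intro x
    by_cases hx : x ∈ Ioc A B
    · have : (Prod.mk x ⁻¹' {y : ℝ × ℝ | y.1 ∈ Ioc A B ∧ y.2 - h y.1 ∈ Ioc C D})
          = Ioc (C + h x) (D + h x) := by
        ext z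
        simp only [mem_preimage, mem_setOf_eq, mem_Ioc]
        constructor
        · rintro ⟨-, h1, h2⟩; exact ⟨by linarith, by linarith⟩
        · rintro ⟨h1, h2⟩
          exact ⟨by simpa using hx, by linarith, by linarith⟩
      rw [this, Real.volume_Ioc, Set.indicator_of_mem hx]
      ring_nf
    · have : (Prod.mk x ⁻¹' {y : ℝ × ℝ | y.1 ∈ Ioc A B ∧ y.2 - h y.1 ∈ Ioc C D}) = ∅ := by
        ext z; simp only [mem_preimage, mem_setOf_eq, mem_empty_iff_false, iff_false]
        rintro ⟨h1, _⟩; exact hx h1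
      rw [this, Set.indicator_of_notMem hx, measure_empty]
  calc ∫⁻ x, volume (Prod.mk x ⁻¹' {y : ℝ × ℝ | y.1 ∈ Ioc A B ∧ y.2 - h y.1 ∈ Ioc C D})
      = ∫⁻ x, (Ioc A B).indicator (fun _ => ENNReal.ofReal (D - C)) x := lintegral_congr hsl
    _ = ∫⁻ x in Ioc A B, ENNReal.ofReal (D - C) := lintegral_indicator measurableSet_Ioc _
    _ = ENNReal.ofReal (D - C) * volume (Ioc A B) := setLIntegral_const _ _
    _ = ENNReal.ofReal (B - A) * ENNReal.ofReal (D - C) := by rw [Real.volume_Ioc, mul_comm]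

lemma eLpNormENN_lower (g : ℝ → ℝ≥0∞) (r : ℝ≥0∞) (hr : 1 ≤ r) (c : ℝ≥0∞)
    (hc : ∀ u ∈ Icc (1:ℝ) 2, c ≤ g u) :
    c ≤ eLpNormENN g r (volume.restrict (Icc 1 2)) := by
  set μ := volume.restrict (Icc (1:ℝ) 2) with hμ
  have huniv : μ univ = 1 := by
    rw [hμ, Measure.restrict_apply_univ, Real.volume_Icc]; norm_num
  have hae : ∀ᵐ u ∂μ, c ≤ g u := (ae_restrict_mem measurableSet_Icc).mono hc
  by_cases hrtop : r = ∞
  · rw [eLpNormENN, if_pos hrtop]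
    have hne : μ ≠ 0 := by
      intro h0; rw [h0] at huniv; simp at huniv
    calc c = essSup (fun _ : ℝ => c) μ := (essSup_const c hne).symm
      _ ≤ essSup g μ := essSup_mono_ae hae
  · rw [eLpNormENN, if_neg hrtop]
    have hρ : (1:ℝ) ≤ r.toReal := by simpa using ENNReal.toReal_mono hrtop hr
    have hρ0 : r.toReal ≠ 0 := by positivity
    have h1 : c ^ r.toReal ≤ ∫⁻ u, g u ^ r.toReal ∂μ := by
      calc c ^ r.toReal = c ^ r.toReal * μ univ := by rw [huniv, mul_one]
        _ = ∫⁻ _, c ^ r.toReal ∂μ := (lintegral_const _).symm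
        _ ≤ ∫⁻ u, g u ^ r.toReal ∂μ :=
            lintegral_mono_ae (hae.mono fun u hu => ENNReal.rpow_le_rpow hu (by linarith))
    calc c = (c ^ r.toReal) ^ (1 / r.toReal) := by
          rw [← ENNReal.rpow_mul, mul_one_div, div_self hρ0, ENNReal.rpow_one]
      _ ≤ (∫⁻ u, g u ^ r.toReal ∂μ) ^ (1 / r.toReal) := ENNReal.rpow_le_rpow h1 (by positivity)

lemma expo_le {K₁ K₂ σ₁ σ₂ : ℝ} (hK₁ : 0 < K₁)
    (H : ∀ δ : ℝ, 0 < δ → δ ≤ 1/16 → K₁ * δ ^ σ₁ ≤ K₂ * δ ^ σ₂) : σ₂ ≤ σ₁ := by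
  by_contra hcon
  push_neg at hcon
  have hc : 0 < σ₂ - σ₁ := by linarith
  have H2 : ∀ δ : ℝ, 0 < δ → δ ≤ 1/16 → K₁ ≤ K₂ * δ ^ (σ₂ - σ₁) := by
    intro δ hδ hδ16
    have h := H δ hδ hδ16
    have hpow : (0:ℝ) < δ ^ σ₁ := Real.rpow_pos_of_pos hδ _
    have : K₁ * δ ^ σ₁ ≤ K₂ * δ ^ (σ₂ - σ₁) * δ ^ σ₁ := by
      rw [mul_assoc, ← Real.rpow_add hδ]
      simpa [sub_add_cancel] using h
    exact le_of_mul_le_mul_right this hpow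
  have htend : Tendsto (fun δ : ℝ => K₂ * δ ^ (σ₂ - σ₁)) (nhdsWithin 0 (Ioi 0)) (nhds 0) := by
    have h0 : Tendsto (fun δ : ℝ => δ ^ (σ₂ - σ₁)) (nhdsWithin 0 (Ioi 0)) (nhds 0) := by
      have hcont : ContinuousAt (fun δ : ℝ => δ ^ (σ₂ - σ₁)) 0 :=
        Real.continuousAt_rpow_const 0 _ (Or.inr hc.le)
      have := hcont.continuousWithinAt (s := Ioi (0:ℝ))
      have h00 : (0:ℝ) ^ (σ₂ - σ₁) = 0 := Real.zero_rpow (ne_of_gt hc)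
      simpa [ContinuousWithinAt, h00] using this
    simpa using h0.const_mul K₂
  have hev1 : ∀ᶠ δ in nhdsWithin (0:ℝ) (Ioi 0), K₂ * δ ^ (σ₂ - σ₁) < K₁ :=
    htend.eventually_lt_const hK₁
  have hev2 : ∀ᶠ δ in nhdsWithin (0:ℝ) (Ioi 0), δ ∈ Ioc (0:ℝ) (1/16) :=
    Ioc_mem_nhdsGT_of_mem (by norm_num : (0:ℝ) ∈ Ico (0:ℝ) (1/16))
  obtain ⟨δ, h1, h2⟩ := (hev1.and hev2).exists
  exact absurd (H2 δ h2.1 h2.2) (not_le.mpr h1)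

lemma Tavg_indicator_eq (γ γm : ℝ → ℝ) (hγm : Measurable γm)
    (hae : γ =ᵐ[volume.restrict (Ioc (0:ℝ) 1)] γm)
    (Y : Set (ℝ × ℝ)) (hY : MeasurableSet Y) (u : ℝ) (x : ℝ × ℝ) :
    Tavg γ (Y.indicator fun _ => (1:ℝ)) x u
      = ((volume.restrict (Ioc (0:ℝ) 1))
          {t : ℝ | (x.1 - u*t, x.2 - u*γm t) ∈ Y}).toReal := by
  have hmap : Measurable fun t : ℝ => (x.1 - u*t, x.2 - u*γm t) :=
    (measurable_const.sub (measurable_id.const_mul u)).prodMk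
      (measurable_const.sub (hγm.const_mul u))
  have hS : MeasurableSet {t : ℝ | (x.1 - u*t, x.2 - u*γm t) ∈ Y} := hmap hY
  have hcongr : ∀ᵐ t ∂(volume.restrict (Ioc (0:ℝ) 1)),
      Y.indicator (fun _ => (1:ℝ)) (x.1 - u*t, x.2 - u*γ t)
        = Set.indicator {t : ℝ | (x.1 - u*t, x.2 - u*γm t) ∈ Y} (fun _ => (1:ℝ)) t := by
    refine hae.mono fun t ht => ?_
    simp only [Set.indicator_apply, Set.mem_setOf_eq, ht]
    rfl
  rw [Tavg, integral_congr_ae hcongr, integral_indicator_const (1:ℝ) hS]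
  simp
  rfl

lemma A_meas (γm : ℝ → ℝ) (hγm : Measurable γm)
    (Y : Set (ℝ × ℝ)) (hY : MeasurableSet Y) (u : ℝ) :
    Measurable (fun x : ℝ × ℝ => (volume.restrict (Ioc (0:ℝ) 1))
      {t : ℝ | (x.1 - u*t, x.2 - u*γm t) ∈ Y}) := by
  have hmapW : Measurable fun z : (ℝ × ℝ) × ℝ => (z.1.1 - u*z.2, z.1.2 - u*γm z.2) := by
    apply Measurable.prodMk
    · exact (measurable_fst.fst).sub (measurable_snd.const_mul u)
    · exact (measurable_fst.snd).sub ((hγm.comp measurable_snd).const_mul u)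
  have hW : MeasurableSet {z : (ℝ × ℝ) × ℝ | (z.1.1 - u*z.2, z.1.2 - u*γm z.2) ∈ Y} :=
    hmapW hY
  exact measurable_measure_prodMk_left hW


set_option maxHeartbeats 1000000 in
lemma core_estimate
    (γ γc φ : ℝ → ℝ)
    (hγco : ContinuousOn γ (Ioc 0 1))
    (hγcCont : Continuous γc)
    (hagree : ∀ t ∈ Icc (1/8 : ℝ) (5/8 : ℝ), γ t = γc t)
    (p q r : ℝ≥0∞) (hp : 1 ≤ p) (hp_top : p ≠ ∞) (hq1 : 1 < q) (hr : 1 ≤ r)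
    (C' : ℝ) (hC' : 0 < C')
    (hbdd : ∀ f : ℝ × ℝ → ℝ, MemLp f p volume →
      mixedUX r q (Tavg γ f) ≤ ENNReal.ofReal C' * eLpNorm f p volume)
    (s B w δ : ℝ) (hB : 0 < B) (hδ : 0 < δ) (hδ16 : δ ≤ 1/16)
    (hw : 0 < w) (hw4 : w ≤ 1/4)
    (hderiv : ∀ z ∈ Icc (1/4 - δ : ℝ) (1/4 + w), HasDerivAt γc (φ z) z)
    (hφB : ∀ z ∈ Icc (1/4 - δ : ℝ) (1/4 + w), |φ z - s| ≤ B) :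
    (δ/2) * (2*B*δ*w) ^ ((q⁻¹).toReal) ≤ C' * (δ*(4*(B*δ))) ^ ((p⁻¹).toReal) := by
  set e := B * δ with he
  set m := 4 * e with hm
  have he0 : 0 < e := mul_pos hB hδ
  have hm0 : 0 < m := by rw [hm]; linarith
  set Q := (q⁻¹).toReal with hQdef
  set P := (p⁻¹).toReal with hPdef
  have hQ0 : 0 ≤ Q := ENNReal.toReal_nonneg
  set Y : Set (ℝ × ℝ) := {y : ℝ × ℝ | y.1 ∈ Ioc (0:ℝ) δ ∧ y.2 - s * y.1 ∈ Ioc e (e+m)}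
    with hYdef
  have hY : MeasurableSet Y :=
    shearMeas (fun z => s * z) (continuous_const.mul continuous_id) 0 δ e (e+m)
  have hvolY : volume Y = ENNReal.ofReal (δ * m) := by
    have h2 := shearVol (fun z => s * z) (continuous_const.mul continuous_id) 0 δ e (e+m)
    rw [show (δ:ℝ) - 0 = δ by ring, show e + m - e = m by ring,
      ← ENNReal.ofReal_mul hδ.le] at h2
    exact h2
  set f : ℝ × ℝ → ℝ := Y.indicator (fun _ => (1:ℝ)) with hfdef
  have hvolY_ne_top : volume Y ≠ ∞ := by rw [hvolY]; exact ENNReal.ofReal_ne_top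
  have hmem : MemLp f p volume := memLp_indicator_const p hY 1 (Or.inr hvolY_ne_top)
  have hp0 : p ≠ 0 := (lt_of_lt_of_le zero_lt_one hp).ne'
  have hfnorm : eLpNorm f p volume = (ENNReal.ofReal (δ * m)) ^ P := by
    rw [hfdef, eLpNorm_indicator_const hY hp0 hp_top, hvolY]
    simp [hPdef, ENNReal.toReal_inv, one_div]
  set ρ := volume.restrict (Ioc (0:ℝ) 1) with hρdef
  have hγae : AEMeasurable γ ρ := hγco.aemeasurable measurableSet_Ioc
  set γm := hγae.mk γ with hγmdef
  have hγm : Measurable γm := hγae.measurable_mk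
  have haem : γ =ᵐ[ρ] γm := hγae.ae_eq_mk
  have hnull : ρ {t : ℝ | ¬ γ t = γm t} = 0 := ae_iff.mp haem
  have hkey : ∀ u ∈ Icc (1:ℝ) 2,
      ENNReal.ofReal (δ/2) * (ENNReal.ofReal (2*B*δ*w)) ^ Q
        ≤ eLpNorm (fun x => Tavg γ f x u) q volume := by
    intro u hu
    obtain ⟨hu1, hu2⟩ := hu
    have hupos : (0:ℝ) < u := lt_of_lt_of_le zero_lt_one hu1
    set D : Set (ℝ × ℝ) := {x : ℝ × ℝ | x.1 ∈ Ioc (u*(1/4)) (u*(1/4+w)) ∧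
      x.2 - u * γc (x.1/u) ∈ Ioc (2*e) m} with hDdef
    have hcd : Continuous fun z : ℝ => u * γc (z / u) :=
      continuous_const.mul (hγcCont.comp (continuous_id.div_const u))
    have hD : MeasurableSet D := shearMeas _ hcd _ _ _ _
    have hvolD : volume D = ENNReal.ofReal (u*w) * ENNReal.ofReal (2*e) := by
      have h2 := shearVol _ hcd (u*(1/4)) (u*(1/4+w)) (2*e) m
      rw [show u*(1/4+w) - u*(1/4) = u*w by ring,
        show m - 2*e = 2*e by rw [hm]; ring] at h2
      exact h2
    set A : (ℝ × ℝ) → ℝ≥0∞ := fun x => ρ {t : ℝ | (x.1 - u*t, x.2 - u*γm t) ∈ Y}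
      with hAdef
    have hAmeas : Measurable A := A_meas γm hγm Y hY u
    have hAne : ∀ x, A x ≠ ∞ := by
      intro x
      have h1 : A x ≤ ρ univ := measure_mono (subset_univ _)
      have h2 : ρ univ ≠ ∞ := by
        rw [hρdef, Measure.restrict_apply_univ, Real.volume_Ioc]
        exact ENNReal.ofReal_ne_top
      exact ne_top_of_le_ne_top h2 h1
    have hTA : ∀ x, Tavg γ f x u = (A x).toReal := fun x =>
      Tavg_indicator_eq γ γm hγm haem Y hY u x
    have hofReal : ∀ x, ENNReal.ofReal (Tavg γ f x u) = A x := fun x => by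
      rw [hTA x, ENNReal.ofReal_toReal (hAne x)]
    have hlow : ∀ x ∈ D, ENNReal.ofReal (δ/2) ≤ A x := by
      intro x hx
      obtain ⟨⟨hx1a, hx1b⟩, hv1, hv2⟩ := hx
      have hsub : Ico ((x.1 - δ)/u) (x.1/u) ∩ {t : ℝ | γ t = γm t}
          ⊆ {t : ℝ | (x.1 - u*t, x.2 - u*γm t) ∈ Y} := by
        rintro t ⟨⟨ht1, ht2⟩, hgm⟩
        have hut1 : x.1 - δ ≤ u * t := by
          rw [div_le_iff₀ hupos] at ht1; linarith
        have hut2 : u * t < x.1 := by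
          rw [lt_div_iff₀ hupos] at ht2; linarith
        have hy1pos : 0 < x.1 - u*t := by linarith
        have hy1le : x.1 - u*t ≤ δ := by linarith
        have htlow : 1/4 - δ ≤ t := by
          by_contra hcon
          push_neg at hcon
          have h3 := mul_lt_mul_of_pos_left hcon hupos
          nlinarith
        have hx1u : x.1 / u ≤ 1/4 + w := by
          rw [div_le_iff₀ hupos]; nlinarith
        have hthigh : t ≤ 1/4 + w := le_trans ht2.le hx1u
        have hut' : u * (x.1/u) = x.1 := by field_simp
        have ht'mem : x.1/u ∈ Icc (1/4 - δ : ℝ) (1/4 + w) := by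
          constructor
          · have h4 : (1:ℝ)/4 < x.1/u := by rw [lt_div_iff₀ hupos]; nlinarith
            linarith
          · exact hx1u
        have htmem : t ∈ Icc (1/4 - δ : ℝ) (1/4 + w) := ⟨htlow, hthigh⟩
        have hgd : ∀ z ∈ Icc (1/4 - δ : ℝ) (1/4 + w),
            HasDerivWithinAt (fun z => γc z - s * z) (φ z - s)
              (Icc (1/4 - δ : ℝ) (1/4 + w)) z := by
          intro z hz
          have h1 : HasDerivAt (fun z : ℝ => s * z) s z := by
            simpa using (hasDerivAt_id z).const_mul s
          exact ((hderiv z hz).sub h1).hasDerivWithinAt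
        have hMVT : ‖(γc (x.1/u) - s * (x.1/u)) - (γc t - s * t)‖ ≤ B * ‖x.1/u - t‖ :=
          Convex.norm_image_sub_le_of_norm_hasDerivWithin_le hgd
            (fun z hz => by simpa [Real.norm_eq_abs] using hφB z hz)
            (convex_Icc _ _) htmem ht'mem
        have habs : |(γc (x.1/u) - s * (x.1/u)) - (γc t - s * t)| ≤ B * (x.1/u - t) := by
          have h1 : ‖x.1/u - t‖ = x.1/u - t := by
            rw [Real.norm_eq_abs, abs_of_pos (by linarith)]
          rw [Real.norm_eq_abs] at hMVT
          rw [h1] at hMVT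
          exact hMVT
        have hEbound : |u * ((γc (x.1/u) - s * (x.1/u)) - (γc t - s * t))| ≤ e := by
          rw [abs_mul, abs_of_pos hupos]
          calc u * |(γc (x.1/u) - s*(x.1/u)) - (γc t - s*t)|
              ≤ u * (B * (x.1/u - t)) := mul_le_mul_of_nonneg_left habs hupos.le
            _ = B * (u * (x.1/u) - u * t) := by ring
            _ = B * (x.1 - u*t) := by rw [hut']
            _ ≤ B * δ := mul_le_mul_of_nonneg_left hy1le hB.le
            _ = e := he.symm
        have hγt : γ t = γc t := hagree t ⟨by linarith, by linarith⟩
        show (x.1 - u*t, x.2 - u*γm t) ∈ Y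
        refine ⟨⟨hy1pos, hy1le⟩, ?_⟩
        have hident : (x.2 - u*γm t) - s * (x.1 - u*t)
            = (x.2 - u * γc (x.1/u))
              + u * ((γc (x.1/u) - s*(x.1/u)) - (γc t - s*t)) := by
          rw [← hgm, hγt]
          linear_combination s * hut'
        have hE := abs_le.mp hEbound
        constructor
        · show e < (x.2 - u*γm t) - s * (x.1 - u*t)
          rw [hident]; linarith [hE.1]
        · show (x.2 - u*γm t) - s * (x.1 - u*t) ≤ e + m
          rw [hident]; linarith [hE.2]
      have hTsub : Ico ((x.1 - δ)/u) (x.1/u) ⊆ Ioc (0:ℝ) 1 := by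
        rintro t ⟨ht1, ht2⟩
        constructor
        · have h5 : 0 < (x.1 - δ)/u := div_pos (by nlinarith) hupos
          linarith
        · have h6 : x.1/u ≤ 1/4 + w := by rw [div_le_iff₀ hupos]; nlinarith
          linarith
      calc ENNReal.ofReal (δ/2) ≤ ENNReal.ofReal (δ/u) := by
            apply ENNReal.ofReal_le_ofReal
            rw [div_le_div_iff₀ (by norm_num) hupos]
            nlinarith
        _ = ρ (Ico ((x.1 - δ)/u) (x.1/u)) := by
            rw [hρdef, Measure.restrict_apply measurableSet_Ico,
              inter_eq_left.mpr hTsub, Real.volume_Ico]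
            congr 1
            field_simp
            ring
        _ = ρ (Ico ((x.1 - δ)/u) (x.1/u) ∩ {t : ℝ | γ t = γm t}) :=
            (measure_inter_conull (by exact hnull)).symm
        _ ≤ A x := measure_mono hsub
    have hpair_low : ENNReal.ofReal (δ/2) * volume D ≤ ∫⁻ x in D, A x ∂volume := by
      calc ENNReal.ofReal (δ/2) * volume D
          = ∫⁻ _ in D, ENNReal.ofReal (δ/2) ∂volume := (setLIntegral_const _ _).symm
        _ ≤ ∫⁻ x in D, A x ∂volume := setLIntegral_mono hAmeas hlow
    have hVne0 : volume D ≠ 0 := by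
      rw [hvolD]
      exact mul_ne_zero (ENNReal.ofReal_pos.mpr (by positivity)).ne'
        (ENNReal.ofReal_pos.mpr (by positivity)).ne'
    have hVtop : volume D ≠ ∞ := by
      rw [hvolD]; exact ENNReal.mul_ne_top ENNReal.ofReal_ne_top ENNReal.ofReal_ne_top
    have hVlow : ENNReal.ofReal (2*B*δ*w) ≤ volume D := by
      rw [hvolD, ← ENNReal.ofReal_mul (by positivity)]
      apply ENNReal.ofReal_le_ofReal
      rw [he]
      nlinarith [mul_nonneg (mul_nonneg (mul_nonneg (by linarith : (0:ℝ) ≤ 2*B) hδ.le) hw.le)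
        (by linarith : (0:ℝ) ≤ u - 1)]
    have hquse : ENNReal.ofReal (δ/2) * (volume D) ^ Q
        ≤ eLpNorm (fun x => Tavg γ f x u) q volume := by
      by_cases hqtop : q = ∞
      · have hQ0' : Q = 0 := by rw [hQdef, hqtop]; simp
        have hup : ∫⁻ x in D, A x ∂volume
            ≤ eLpNormEssSup (fun x => Tavg γ f x u) volume * volume D := by
          have hAle : ∀ᵐ x ∂(volume.restrict D),
              A x ≤ eLpNormEssSup (fun x => Tavg γ f x u) volume := by
            apply ae_restrict_of_ae
            have h1 : ∀ᵐ x ∂(volume : Measure (ℝ×ℝ)),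
                (‖Tavg γ f x u‖₊ : ℝ≥0∞)
                  ≤ essSup (fun x => (‖Tavg γ f x u‖₊ : ℝ≥0∞)) volume := ae_le_essSup
            refine h1.mono fun x hx => ?_
            have h2 : (‖Tavg γ f x u‖₊ : ℝ≥0∞) = A x := by
              rw [← enorm_eq_nnnorm, Real.enorm_eq_ofReal (by rw [hTA]; exact ENNReal.toReal_nonneg),
                hofReal]
            rw [← h2]
            exact hx
          calc ∫⁻ x in D, A x ∂volume
              ≤ ∫⁻ _ in D, eLpNormEssSup (fun x => Tavg γ f x u) volume ∂volume :=
                lintegral_mono_ae hAle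
            _ = eLpNormEssSup (fun x => Tavg γ f x u) volume * volume D :=
                setLIntegral_const _ _
        have hcomb := le_trans hpair_low hup
        have hcancel := (ENNReal.mul_le_mul_iff_left hVne0 hVtop).mp hcomb
        rw [hQ0', ENNReal.rpow_zero, mul_one, hqtop, eLpNorm_exponent_top]
        exact hcancel
      · have hq0 : q ≠ 0 := (lt_trans zero_lt_one hq1).ne'
        have hqr1 : 1 < q.toReal := by
          have := (ENNReal.toReal_lt_toReal (by simp) hqtop).mpr hq1
          simpa using this
        have hconj := Real.HolderConjugate.conjExponent hqr1
        set qc := (q.toReal).conjExponent with hqcdef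
        have hqcpos : 0 < qc := hconj.symm.pos
        have hindm : Measurable (D.indicator (fun _ => (1:ℝ≥0∞))) :=
          measurable_const.indicator hD
        have hH := ENNReal.lintegral_mul_le_Lp_mul_Lq volume hconj
          hAmeas.aemeasurable hindm.aemeasurable
        have hlhs : ∫⁻ x, (A * D.indicator (fun _ => (1:ℝ≥0∞))) x ∂volume
            = ∫⁻ x in D, A x ∂volume := by
          rw [← lintegral_indicator hD]
          apply lintegral_congr
          intro x
          by_cases hx : x ∈ D <;> simp [hx, Pi.mul_apply]
        have hrhs2 : (∫⁻ x, (D.indicator (fun _ => (1:ℝ≥0∞))) x ^ qc ∂volume) ^ (1/qc)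
            = (volume D) ^ (1/qc) := by
          have h3 : ∀ x : ℝ × ℝ, (D.indicator (fun _ => (1:ℝ≥0∞))) x ^ qc
              = (D.indicator (fun _ => (1:ℝ≥0∞))) x := by
            intro x
            by_cases hx : x ∈ D <;>
              simp [hx, ENNReal.zero_rpow_of_pos hqcpos]
          rw [lintegral_congr h3, lintegral_indicator hD, setLIntegral_const, one_mul]
        have hfst : (∫⁻ x, A x ^ q.toReal ∂volume) ^ (1/q.toReal)
            = eLpNorm (fun x => Tavg γ f x u) q volume := by
          rw [eLpNorm_eq_lintegral_rpow_enorm_toReal hq0 hqtop]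
          congr 1
          apply lintegral_congr
          intro x
          congr 1
          rw [Real.enorm_eq_ofReal (by rw [hTA]; exact ENNReal.toReal_nonneg), hofReal]
        have hcomb : ENNReal.ofReal (δ/2) * volume D
            ≤ eLpNorm (fun x => Tavg γ f x u) q volume * (volume D) ^ (1/qc) := by
          calc ENNReal.ofReal (δ/2) * volume D
              ≤ ∫⁻ x in D, A x ∂volume := hpair_low
            _ = ∫⁻ x, (A * D.indicator (fun _ => (1:ℝ≥0∞))) x ∂volume := hlhs.symm
            _ ≤ (∫⁻ x, A x ^ q.toReal ∂volume) ^ (1/q.toReal)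
                * (∫⁻ x, (D.indicator (fun _ => (1:ℝ≥0∞))) x ^ qc ∂volume) ^ (1/qc) := hH
            _ = eLpNorm (fun x => Tavg γ f x u) q volume * (volume D) ^ (1/qc) := by
                rw [hfst, hrhs2]
        have hQeq : Q + 1/qc = 1 := by
          have h4 := hconj.inv_add_inv_eq_one
          rw [hQdef, ENNReal.toReal_inv, one_div]
          exact h4
        have hsplit : volume D = (volume D) ^ Q * (volume D) ^ (1/qc) := by
          rw [← ENNReal.rpow_add _ _ hVne0 hVtop, hQeq, ENNReal.rpow_one]
        have hpow_ne0 : (volume D) ^ (1/qc) ≠ 0 := by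
          simp [ENNReal.rpow_eq_zero_iff, hVne0, hVtop]
        have hpow_netop : (volume D) ^ (1/qc) ≠ ∞ :=
          ENNReal.rpow_ne_top_of_nonneg (by positivity) hVtop
        have hcomb2 : ENNReal.ofReal (δ/2) * (volume D) ^ Q * (volume D) ^ (1/qc)
            ≤ eLpNorm (fun x => Tavg γ f x u) q volume * (volume D) ^ (1/qc) := by
          calc ENNReal.ofReal (δ/2) * (volume D) ^ Q * (volume D) ^ (1/qc)
              = ENNReal.ofReal (δ/2) * volume D := by rw [mul_assoc, ← hsplit]
            _ ≤ _ := hcomb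
        exact (ENNReal.mul_le_mul_iff_left hpow_ne0 hpow_netop).mp hcomb2
    calc ENNReal.ofReal (δ/2) * (ENNReal.ofReal (2*B*δ*w)) ^ Q
        ≤ ENNReal.ofReal (δ/2) * (volume D) ^ Q :=
          mul_le_mul_right (ENNReal.rpow_le_rpow hVlow hQ0) _
      _ ≤ eLpNorm (fun x => Tavg γ f x u) q volume := hquse
  have hmix : ENNReal.ofReal (δ/2) * (ENNReal.ofReal (2*B*δ*w)) ^ Q
      ≤ mixedUX r q (Tavg γ f) := by
    rw [mixedUX]
    exact eLpNormENN_lower _ r hr _ hkey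
  have hchain := le_trans hmix (hbdd f hmem)
  rw [hfnorm] at hchain
  have hz1 : (0:ℝ) < 2*B*δ*w := by positivity
  have hz2 : (0:ℝ) < δ * m := by positivity
  rw [ENNReal.ofReal_rpow_of_pos hz1, ← ENNReal.ofReal_mul (by positivity : (0:ℝ) ≤ δ/2),
    ENNReal.ofReal_rpow_of_pos hz2, ← ENNReal.ofReal_mul hC'.le] at hchain
  have hfin := (ENNReal.ofReal_le_ofReal_iff (by positivity)).mp hchain
  have hmm : δ * m = δ*(4*(B*δ)) := by rw [hm, he]
  rw [hmm] at hfin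
  exact hfin


lemma rpow_sq {δ : ℝ} (hδ : 0 < δ) (P : ℝ) : (δ*δ)^P = δ^(2*P) := by
  rw [show δ*δ = δ^(2:ℕ) by ring, ← Real.rpow_natCast δ 2, ← Real.rpow_mul hδ.le]
  norm_num

lemma rpow_cube {δ : ℝ} (hδ : 0 < δ) (P : ℝ) : (δ*δ*δ)^P = δ^(3*P) := by
  rw [show δ*δ*δ = δ^(3:ℕ) by ring, ← Real.rpow_natCast δ 3, ← Real.rpow_mul hδ.le]
  norm_num

set_option maxHeartbeats 1000000 in
theorem timeSpace_necessity_III' (N : ℕ) (hN : 3 ≤ N) (γ : ℝ → ℝ)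
    (hsmooth : ContDiffOn ℝ N γ (Set.Ioc 0 1))
    (p q r : ℝ≥0∞) (hp : 1 ≤ p) (hq : 1 ≤ q) (hr : 1 ≤ r)
    (hbdd : ∃ C : ℝ, ∀ f : ℝ × ℝ → ℝ, MemLp f p volume →
      mixedUX r q (Tavg γ f) ≤ ENNReal.ofReal C * eLpNorm f p volume) :
    max (2 * (p⁻¹).toReal - 1) ((p⁻¹).toReal - 1 / 3) ≤ (q⁻¹).toReal := by
  obtain ⟨C, hC⟩ := hbdd
  have hQ0 : (0:ℝ) ≤ (q⁻¹).toReal := ENNReal.toReal_nonneg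
  by_cases hp_top : p = ∞
  · rw [hp_top]
    simp only [ENNReal.inv_top, ENNReal.toReal_zero]
    exact max_le (by linarith) (by linarith)
  by_cases hq_one : q = 1
  · have hQ1 : (q⁻¹).toReal = 1 := by rw [hq_one]; simp
    have hP1 : (p⁻¹).toReal ≤ 1 := by
      have h1 : p⁻¹ ≤ 1 := ENNReal.inv_le_one.mpr hp
      have := ENNReal.toReal_mono (by simp) h1
      simpa using this
    rw [hQ1]
    exact max_le (by linarith) (by linarith)
  have hq1 : 1 < q := lt_of_le_of_ne hq (Ne.symm hq_one)
  set C' := max C 1 with hC'def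
  have hC' : 0 < C' := lt_of_lt_of_le zero_lt_one (le_max_right _ _)
  have hbdd' : ∀ f : ℝ × ℝ → ℝ, MemLp f p volume →
      mixedUX r q (Tavg γ f) ≤ ENNReal.ofReal C' * eLpNorm f p volume := fun f hf =>
    le_trans (hC f hf)
      (mul_le_mul_left (ENNReal.ofReal_le_ofReal (le_max_left _ _)) _)
  -- regularity
  have h3 : ContDiffOn ℝ 3 γ (Ioc 0 1) := by
    apply hsmooth.of_le
    exact_mod_cast hN
  have hγco : ContinuousOn γ (Ioc 0 1) := h3.continuousOn
  set γc : ℝ → ℝ := fun t => γ (max (1/8) (min t (5/8))) with hγcdef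
  have hclamp_mem : ∀ t : ℝ, max (1/8 : ℝ) (min t (5/8)) ∈ Icc (1/8 : ℝ) (5/8) := by
    intro t
    constructor
    · exact le_max_left _ _
    · exact max_le (by norm_num) (min_le_right _ _)
  have hIccsub : Icc (1/8 : ℝ) (5/8) ⊆ Ioc 0 1 := fun z hz => ⟨by linarith [hz.1], by linarith [hz.2]⟩
  have hγcCont : Continuous γc := by
    apply (hγco.mono hIccsub).comp_continuous
      (continuous_const.max (continuous_id.min continuous_const)) hclamp_mem
  have hagree : ∀ t ∈ Icc (1/8 : ℝ) (5/8 : ℝ), γ t = γc t := by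
    intro t ht
    rw [hγcdef]
    simp only [min_eq_left ht.2, max_eq_right ht.1]
  have hOsub : Ioo (1/8 : ℝ) (5/8) ⊆ Ioc 0 1 := fun z hz => ⟨by linarith [hz.1], by linarith [hz.2]⟩
  have hγcO : ContDiffOn ℝ 3 γc (Ioo (1/8 : ℝ) (5/8)) :=
    (h3.mono hOsub).congr fun t ht => (hagree t ⟨ht.1.le, ht.2.le⟩).symm
  set φ : ℝ → ℝ := deriv γc with hφdef
  set ψ : ℝ → ℝ := deriv φ with hψdef
  have hφ2 : ContDiffOn ℝ 2 φ (Ioo (1/8 : ℝ) (5/8)) := by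
    apply hγcO.deriv_of_isOpen isOpen_Ioo
    norm_num
  have hψ1 : ContDiffOn ℝ 1 ψ (Ioo (1/8 : ℝ) (5/8)) := by
    apply hφ2.deriv_of_isOpen isOpen_Ioo
    norm_num
  have hder1 : ∀ z ∈ Ioo (1/8 : ℝ) (5/8), HasDerivAt γc (φ z) z := by
    intro z hz
    exact ((hγcO.contDiffAt (isOpen_Ioo.mem_nhds hz)).differentiableAt
      (by norm_num)).hasDerivAt
  have hder2 : ∀ z ∈ Ioo (1/8 : ℝ) (5/8), HasDerivAt φ (ψ z) z := by
    intro z hz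
    exact ((hφ2.contDiffAt (isOpen_Ioo.mem_nhds hz)).differentiableAt
      (by norm_num)).hasDerivAt
  have hKcO : Icc (3/16 : ℝ) (1/2) ⊆ Ioo (1/8 : ℝ) (5/8) := fun z hz =>
    ⟨by linarith [hz.1], by linarith [hz.2]⟩
  obtain ⟨M1, hM1⟩ := isCompact_Icc.exists_bound_of_continuousOn
    (hφ2.continuousOn.mono hKcO)
  obtain ⟨M2, hM2⟩ := isCompact_Icc.exists_bound_of_continuousOn
    (hψ1.continuousOn.mono hKcO)
  set M := max 1 (max M1 M2) with hMdef
  have hM1' : ∀ z ∈ Icc (3/16 : ℝ) (1/2), |φ z| ≤ M := by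
    intro z hz
    calc |φ z| = ‖φ z‖ := (Real.norm_eq_abs _).symm
      _ ≤ M1 := hM1 z hz
      _ ≤ M := le_trans (le_max_left _ _) (le_max_right _ _)
  have hM2' : ∀ z ∈ Icc (3/16 : ℝ) (1/2), |ψ z| ≤ M := by
    intro z hz
    calc |ψ z| = ‖ψ z‖ := (Real.norm_eq_abs _).symm
      _ ≤ M2 := hM2 z hz
      _ ≤ M := le_trans (le_max_right _ _) (le_max_right _ _)
  have hMpos : (0:ℝ) < M := lt_of_lt_of_le zero_lt_one (le_max_left _ _)
  set Q := (q⁻¹).toReal with hQdef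
  set P := (p⁻¹).toReal with hPdef
  -- case (a)
  have Ha : 2*P ≤ 1 + Q := by
    have H : ∀ δ : ℝ, 0 < δ → δ ≤ 1/16 →
        ((1/2)*((M/2)^Q)) * δ^(1+Q) ≤ (C'*((4*M)^P)) * δ^(2*P) := by
      intro δ hδ hδ16
      have hcore := core_estimate γ γc φ hγco hγcCont hagree p q r hp hp_top hq1 hr
        C' hC' hbdd' 0 M (1/4) δ hMpos hδ hδ16 (by norm_num) (by norm_num)
        (fun z hz => hder1 z ⟨by linarith [hz.1], by linarith [hz.2]⟩)
        (fun z hz => by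
          have := hM1' z ⟨by linarith [hz.1], by linarith [hz.2]⟩
          simpa using this)
      have ea1 : (2*M*δ*(1/4))^Q = (M/2)^Q * δ^Q := by
        rw [show 2*M*δ*(1/4) = (M/2)*δ by ring]
        rw [Real.mul_rpow (by positivity) hδ.le]
      have ea2 : (δ*(4*(M*δ)))^P = (4*M)^P * δ^(2*P) := by
        rw [show δ*(4*(M*δ)) = (4*M)*(δ*δ) by ring]
        rw [Real.mul_rpow (by positivity) (by positivity)]
        rw [rpow_sq hδ P]
      calc ((1/2)*((M/2)^Q)) * δ^(1+Q)
          = (δ/2) * (2*M*δ*(1/4))^Q := by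
            rw [ea1, Real.rpow_add hδ, Real.rpow_one]; ring
        _ ≤ C' * (δ*(4*(M*δ)))^P := hcore
        _ = (C'*((4*M)^P)) * δ^(2*P) := by rw [ea2]; ring
    have := expo_le (by positivity) H
    linarith
  -- case (b)
  have Hb : 3*P ≤ 1 + 3*Q := by
    have H : ∀ δ : ℝ, 0 < δ → δ ≤ 1/16 →
        ((1/2)*((2*M)^Q)) * δ^(1+3*Q) ≤ (C'*((4*M)^P)) * δ^(3*P) := by
      intro δ hδ hδ16
      have hφBb : ∀ z ∈ Icc (1/4 - δ : ℝ) (1/4 + δ), |φ z - φ (1/4)| ≤ M*δ := by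
        intro z hz
        have hsubKc : Icc (1/4 - δ : ℝ) (1/4 + δ) ⊆ Icc (3/16 : ℝ) (1/2) := fun y hy =>
          ⟨by linarith [hy.1], by linarith [hy.2]⟩
        have hd : ∀ y ∈ Icc (1/4 - δ : ℝ) (1/4 + δ),
            HasDerivWithinAt φ (ψ y) (Icc (1/4 - δ : ℝ) (1/4 + δ)) y := fun y hy =>
          (hder2 y (hKcO (hsubKc hy))).hasDerivWithinAt
        have hbound : ∀ y ∈ Icc (1/4 - δ : ℝ) (1/4 + δ), ‖ψ y‖ ≤ M := fun y hy => by
          rw [Real.norm_eq_abs]; exact hM2' y (hsubKc hy)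
        have h14 : (1/4 : ℝ) ∈ Icc (1/4 - δ : ℝ) (1/4 + δ) := ⟨by linarith, by linarith⟩
        have := Convex.norm_image_sub_le_of_norm_hasDerivWithin_le hd hbound
          (convex_Icc _ _) h14 hz
        rw [Real.norm_eq_abs, Real.norm_eq_abs] at this
        calc |φ z - φ (1/4)| ≤ M * |z - 1/4| := this
          _ ≤ M * δ := by
            apply mul_le_mul_of_nonneg_left _ hMpos.le
            rw [abs_le]
            exact ⟨by linarith [hz.1], by linarith [hz.2]⟩
      have hcore := core_estimate γ γc φ hγco hγcCont hagree p q r hp hp_top hq1 hr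
        C' hC' hbdd' (φ (1/4)) (M*δ) δ δ (by positivity) hδ hδ16 hδ (by linarith)
        (fun z hz => hder1 z ⟨by linarith [hz.1], by linarith [hz.2]⟩)
        hφBb
      have eb1 : (2*(M*δ)*δ*δ)^Q = (2*M)^Q * δ^(3*Q) := by
        rw [show 2*(M*δ)*δ*δ = (2*M)*(δ*δ*δ) by ring]
        rw [Real.mul_rpow (by positivity) (by positivity)]
        rw [rpow_cube hδ Q]
      have eb2 : (δ*(4*((M*δ)*δ)))^P = (4*M)^P * δ^(3*P) := by
        rw [show δ*(4*((M*δ)*δ)) = (4*M)*(δ*δ*δ) by ring]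
        rw [Real.mul_rpow (by positivity) (by positivity)]
        rw [rpow_cube hδ P]
      calc ((1/2)*((2*M)^Q)) * δ^(1+3*Q)
          = (δ/2) * (2*(M*δ)*δ*δ)^Q := by
            rw [eb1, Real.rpow_add hδ, Real.rpow_one]; ring
        _ ≤ C' * (δ*(4*((M*δ)*δ)))^P := hcore
        _ = (C'*((4*M)^P)) * δ^(3*P) := by rw [eb2]; ring
    have := expo_le (by positivity) H
    linarith
  exact max_le (by linarith) (by linarith)

/-- Theorem 1.5, necessary condition (III): if the time-space estimate
`L^p_x → L^r_u L^q_x` holds for `T`, then `1/q ≥ max{2/p - 1, 1/p - 1/3}`. -/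
theorem timeSpace_necessity_III (N : ℕ) (hN : 3 ≤ N) (γ : ℝ → ℝ) (h : CurveHyp γ N)
    (p q r : ℝ≥0∞) (hp : 1 ≤ p) (hq : 1 ≤ q) (hr : 1 ≤ r)
    (hbdd : ∃ C : ℝ, ∀ f : ℝ × ℝ → ℝ, MemLp f p volume →
      mixedUX r q (Tavg γ f) ≤ ENNReal.ofReal C * eLpNorm f p volume) :
    max (2 * (p⁻¹).toReal - 1) ((p⁻¹).toReal - 1 / 3) ≤ (q⁻¹).toReal :=
  timeSpace_necessity_III' N hN γ h.1 p q r hp hq hr hbdd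

end
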